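/- Let F be a real Fréchet space whose topology is generated by a countable separating family of continuous seminorms (ρ_n)_{n∈ℕ}, and let (α_n)_{n∈ℕ} be a sequence of positive real numbers converging to 0. Then the function d(e,f) := sup_{n∈ℕ} α_n · ρ_n(e−f)/(1+ρ_n(e−f)) is a well-defined metric on F which is translation-invariant, induces the original topology of F, and has absolutely convex balls (every open ball centered at 0 is convex and balanced). -/

import Mathlib

open Filter Topology

private lemma ratio_mono {a b : ℝ} (ha : 0 ≤ a) (hab : a ≤ b) :
    a / (1 + a) ≤ b / (1 + b) := by
  rw [div_le_div_iff₀ (by linarith) (by linarith)]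
  nlinarith

private lemma ratio_lt_one {a : ℝ} (ha : 0 ≤ a) : a / (1 + a) < 1 := by
  rw [div_lt_one (by linarith)]; linarith

private lemma ratio_nonneg {a : ℝ} (ha : 0 ≤ a) : 0 ≤ a / (1 + a) :=
  div_nonneg ha (by linarith)

private lemma ratio_subadd {a b : ℝ} (ha : 0 ≤ a) (hb : 0 ≤ b) :
    (a + b) / (1 + (a + b)) ≤ a / (1 + a) + b / (1 + b) := by
  have d1 : (0:ℝ) < 1 + a := by linarith
  have d2 : (0:ℝ) < 1 + b := by linarith
  have d3 : (0:ℝ) < 1 + (a + b) := by linarith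
  rw [div_add_div _ _ (ne_of_gt d1) (ne_of_gt d2), div_le_div_iff₀ d3 (by positivity)]
  nlinarith [mul_nonneg ha hb, mul_nonneg (mul_nonneg ha hb) (add_nonneg ha hb)]

private lemma ratio_lt_rev {a b : ℝ} (ha : 0 ≤ a) (hb : 0 ≤ b)
    (h : a / (1 + a) < b / (1 + b)) : a < b := by
  by_contra hab
  exact absurd (ratio_mono hb (not_lt.mp hab)) (not_le.mpr h)

/-- Let `F` be a real Fréchet space (complete metrizable locally convex
topological vector space) whose topology is generated by a countable separating family of
continuous seminorms `ρ`.  If `α n > 0` and `α n → 0`, then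
`d e f = ⨆ n, α n * ρ n (e - f) / (1 + ρ n (e - f))` is a translation-invariant metric on `F`
which induces the original topology and has absolutely convex balls centered at the origin. -/
theorem sup_seminorm_metric_of_withSeminorms
    {F : Type*} [AddCommGroup F] [Module ℝ F] [UniformSpace F] [IsUniformAddGroup F]
    [ContinuousSMul ℝ F] [LocallyConvexSpace ℝ F] [CompleteSpace F]
    [TopologicalSpace.MetrizableSpace F]
    (ρ : SeminormFamily ℝ F ℕ) (hρ : WithSeminorms ρ)
    (hsep : ∀ x : F, (∀ n : ℕ, ρ n x = 0) → x = 0)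
    (α : ℕ → ℝ) (hαpos : ∀ n : ℕ, 0 < α n) (hα0 : Tendsto α atTop (𝓝 0))
    (d : F → F → ℝ)
    (hd : ∀ e f : F, d e f = ⨆ n : ℕ, α n * (ρ n (e - f) / (1 + ρ n (e - f)))) :
    (∀ e f : F, 0 ≤ d e f) ∧
    (∀ e f : F, d e f = 0 ↔ e = f) ∧
    (∀ e f : F, d e f = d f e) ∧
    (∀ e f h : F, d e h ≤ d e f + d f h) ∧
    (∀ e f h : F, d (e + h) (f + h) = d e f) ∧
    (∀ s : Set F, IsOpen s ↔ ∀ x ∈ s, ∃ ε > 0, {y : F | d x y < ε} ⊆ s) ∧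
    (∀ ε > 0, Convex ℝ {y : F | d y 0 < ε} ∧ Balanced ℝ {y : F | d y 0 < ε}) := by
  -- the building blocks
  set g : ℕ → F → ℝ := fun n x => α n * (ρ n x / (1 + ρ n x)) with hg
  have hρnn : ∀ (n : ℕ) (x : F), 0 ≤ ρ n x := fun n x => apply_nonneg _ _
  have hgnn : ∀ n x, 0 ≤ g n x := fun n x =>
    mul_nonneg (hαpos n).le (ratio_nonneg (hρnn n x))
  -- a uniform bound
  obtain ⟨C0, hC0⟩ := hα0.bddAbove_range
  set C : ℝ := max C0 1 with hC
  have hCpos : (0:ℝ) < C := lt_of_lt_of_le one_pos (le_max_right _ _)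
  have hαC : ∀ n, α n ≤ C := fun n =>
    le_trans (hC0 ⟨n, rfl⟩) (le_max_left _ _)
  have hgC : ∀ n x, g n x ≤ C := fun n x => by
    have h1 : g n x ≤ α n * 1 :=
      mul_le_mul_of_nonneg_left (ratio_lt_one (hρnn n x)).le (hαpos n).le
    simpa using h1.trans (by simpa using hαC n)
  have hbdd : ∀ x : F, BddAbove (Set.range fun n => g n x) := fun x =>
    ⟨C, fun v ⟨n, hn⟩ => hn ▸ hgC n x⟩
  have hle_sup : ∀ (x : F) (n : ℕ), g n x ≤ ⨆ m, g m x := fun x n =>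
    le_ciSup (hbdd x) n
  have hsupnn : ∀ x : F, 0 ≤ ⨆ n, g n x := fun x => Real.iSup_nonneg (fun n => hgnn n x)
  -- monotonicity of the sup in the seminorms
  have hmono : ∀ x y : F, (∀ n, ρ n x ≤ ρ n y) → (⨆ n, g n x) ≤ ⨆ n, g n y := by
    intro x y hxy
    refine ciSup_le fun n => le_trans ?_ (hle_sup y n)
    exact mul_le_mul_of_nonneg_left (ratio_mono (hρnn n x) (hxy n)) (hαpos n).le
  have hd' : ∀ e f : F, d e f = ⨆ n, g n (e - f) := hd
  have hgneg : ∀ (n : ℕ) (x : F), g n (-x) = g n x := by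
    intro n x; simp only [hg, map_neg_eq_map]
  have hgsub : ∀ (n : ℕ) (x y : F), g n (x - y) = g n (y - x) := by
    intro n x y; rw [← neg_sub y x, hgneg]
  -- rewrite d in terms of the sup
  refine ⟨?_, ?_, ?_, ?_, ?_, ?_, ?_⟩
  · intro e f; rw [hd']; exact hsupnn _
  · intro e f
    constructor
    · intro h0
      have hz : ∀ n, ρ n (e - f) = 0 := by
        intro n
        have h1 : g n (e - f) ≤ 0 := by
          rw [hd'] at h0; rw [← h0]; exact hle_sup _ n
        have h2 : g n (e - f) = 0 := le_antisymm h1 (hgnn n _)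
        have h3 : ρ n (e - f) / (1 + ρ n (e - f)) = 0 := by
          rcases mul_eq_zero.mp h2 with h | h
          · exact absurd h (ne_of_gt (hαpos n))
          · exact h
        rcases div_eq_zero_iff.mp h3 with h | h
        · exact h
        · exact absurd h (by positivity)
      have := hsep (e - f) hz
      exact sub_eq_zero.mp this
    · rintro rfl
      rw [hd']
      simp [hg, ciSup_const]
  · intro e f
    rw [hd', hd']
    congr 1; funext n
    exact hgsub n e f
  · intro e f h
    rw [hd', hd', hd']
    refine ciSup_le fun n => ?_
    have h1 : ρ n (e - h) ≤ ρ n (e - f) + ρ n (f - h) := by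
      have := map_add_le_add (ρ n) (e - f) (f - h)
      simpa using this
    have h2 : ρ n (e - h) / (1 + ρ n (e - h)) ≤
        ρ n (e - f) / (1 + ρ n (e - f)) + ρ n (f - h) / (1 + ρ n (f - h)) :=
      le_trans (ratio_mono (hρnn n _) h1) (ratio_subadd (hρnn n _) (hρnn n _))
    calc g n (e - h)
        ≤ α n * (ρ n (e - f) / (1 + ρ n (e - f)) + ρ n (f - h) / (1 + ρ n (f - h))) :=
          mul_le_mul_of_nonneg_left h2 (hαpos n).le
      _ = g n (e - f) + g n (f - h) := mul_add _ _ _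
      _ ≤ (⨆ m, g m (e - f)) + ⨆ m, g m (f - h) :=
          add_le_add (hle_sup _ n) (hle_sup _ n)
  · intro e f h
    rw [hd', hd']
    simp [add_sub_add_right_eq_sub]
  · -- topology
    intro s
    constructor
    · intro hs x hx
      have hnhds : (fun y => x + y) ⁻¹' s ∈ 𝓝 (0 : F) := by
        have hc : Continuous fun y : F => x + y := continuous_const.add continuous_id
        exact hc.continuousAt.preimage_mem_nhds (by simpa using hs.mem_nhds hx)
      obtain ⟨U, hU, hUs⟩ := (hρ.hasBasis.mem_iff).mp hnhds
      obtain ⟨I, r, hr, rfl⟩ := ρ.basisSets_iff.mp hU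
      rcases I.eq_empty_or_nonempty with rfl | hne
      · refine ⟨1, one_pos, fun y _ => ?_⟩
        have : y - x ∈ (Finset.sup (∅ : Finset ℕ) ρ).ball 0 r := by
          simp [Seminorm.mem_ball, hr]
        have := hUs this
        simpa using this
      · refine ⟨(I.inf' hne α) * (r / (1 + r)), ?_, ?_⟩
        · have hinf : 0 < I.inf' hne α :=
            (Finset.lt_inf'_iff hne).mpr fun i _ => hαpos i
          positivity
        · intro y hy
          simp only [Set.mem_setOf_eq] at hy
          have hball : y - x ∈ (I.sup ρ).ball 0 r := by
            rw [Seminorm.mem_ball_zero]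
            refine Seminorm.finset_sup_apply_lt hr fun i hi => ?_
            have h1 : g i (x - y) ≤ d x y := by rw [hd']; exact hle_sup _ i
            have h2 : g i (x - y) < α i * (r / (1 + r)) := by
              refine lt_of_le_of_lt h1 (lt_of_lt_of_le hy ?_)
              exact mul_le_mul_of_nonneg_right (Finset.inf'_le α hi)
                (ratio_nonneg hr.le)
            have h3 : ρ i (x - y) / (1 + ρ i (x - y)) < r / (1 + r) :=
              lt_of_mul_lt_mul_left h2 (hαpos i).le
            have h4 : ρ i (x - y) < r := ratio_lt_rev (hρnn i _) hr.le h3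
            rwa [← neg_sub y x, map_neg_eq_map] at h4
          have := hUs hball
          simpa using this
    · intro H
      rw [isOpen_iff_mem_nhds]
      intro x hx
      obtain ⟨ε, hε, hball⟩ := H x hx
      refine Filter.mem_of_superset ?_ hball
      have hε2 : (0:ℝ) < ε / 2 := by linarith
      have hev : ∀ᶠ n in atTop, α n < ε / 2 := hα0.eventually (gt_mem_nhds hε2)
      obtain ⟨N, hN⟩ := eventually_atTop.mp hev
      set δ : ℝ := ε / (2 * (C + 1)) with hδ
      have hδpos : 0 < δ := by positivity
      set U : Set F := ⋂ n ∈ Finset.range N, {y : F | ρ n (y - x) < δ} with hU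
      have hUopen : IsOpen U := by
        refine isOpen_biInter_finset fun n _ => ?_
        have hc : Continuous fun y : F => ρ n (y - x) :=
          (hρ.continuous_seminorm n).comp (continuous_id.sub continuous_const)
        exact isOpen_Iio.preimage hc
      have hxU : x ∈ U := by
        simp only [hU, Set.mem_iInter, Set.mem_setOf_eq]
        intro n _
        simpa using hδpos
      refine Filter.mem_of_superset (hUopen.mem_nhds hxU) ?_
      intro y hy
      simp only [hU, Set.mem_iInter, Set.mem_setOf_eq] at hy
      show d x y < ε
      rw [hd']
      refine lt_of_le_of_lt (ciSup_le fun n => ?_) (show ε / 2 < ε by linarith)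
      rcases lt_or_ge n N with hn | hn
      · have hρδ : ρ n (x - y) < δ := by
          rw [← neg_sub y x, map_neg_eq_map]
          exact hy n (Finset.mem_range.mpr hn)
        have h1 : ρ n (x - y) / (1 + ρ n (x - y)) ≤ ρ n (x - y) :=
          div_le_self (hρnn n _) (by linarith [hρnn n (x - y)])
        have h2 : g n (x - y) ≤ α n * ρ n (x - y) :=
          mul_le_mul_of_nonneg_left h1 (hαpos n).le
        have h3 : α n * ρ n (x - y) ≤ C * δ := by
          have := mul_le_mul (hαC n) hρδ.le (hρnn n _) hCpos.le
          linarith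
        have h4 : C * δ ≤ ε / 2 := by
          rw [hδ, mul_div_assoc', div_le_div_iff₀ (by positivity) (by norm_num)]
          nlinarith
        linarith
      · have h1 : g n (x - y) ≤ α n * 1 :=
          mul_le_mul_of_nonneg_left (ratio_lt_one (hρnn n _)).le (hαpos n).le
        have h2 : α n < ε / 2 := hN n hn
        linarith
  · -- convexity and balancedness
    intro ε hε
    have hd0 : ∀ y : F, d y 0 = ⨆ n, g n y := by
      intro y; rw [hd']; simp
    constructor
    · intro y hy z hz a b ha hb hab
      simp only [Set.mem_setOf_eq, hd0] at hy hz ⊢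
      have key : ∀ n, ρ n (a • y + b • z) ≤ max (ρ n y) (ρ n z) := by
        intro n
        calc ρ n (a • y + b • z) ≤ ρ n (a • y) + ρ n (b • z) := map_add_le_add _ _ _
          _ = a * ρ n y + b * ρ n z := by
              rw [map_smul_eq_mul, map_smul_eq_mul, Real.norm_eq_abs,
                abs_of_nonneg ha, Real.norm_eq_abs, abs_of_nonneg hb]
          _ ≤ a * max (ρ n y) (ρ n z) + b * max (ρ n y) (ρ n z) := by
              gcongr
              · exact le_max_left _ _
              · exact le_max_right _ _
          _ = max (ρ n y) (ρ n z) := by rw [← add_mul, hab, one_mul]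
      refine lt_of_le_of_lt (ciSup_le fun n => ?_) (max_lt hy hz)
      have h1 : g n (a • y + b • z) ≤ max (g n y) (g n z) := by
        rcases le_total (ρ n y) (ρ n z) with h | h
        · refine le_trans ?_ (le_max_right _ _)
          refine mul_le_mul_of_nonneg_left ?_ (hαpos n).le
          exact ratio_mono (hρnn n _) (by simpa [max_eq_right h] using key n)
        · refine le_trans ?_ (le_max_left _ _)
          refine mul_le_mul_of_nonneg_left ?_ (hαpos n).le
          exact ratio_mono (hρnn n _) (by simpa [max_eq_left h] using key n)
      refine h1.trans (max_le_max ?_ ?_)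
      · exact hle_sup y n
      · exact hle_sup z n
    · intro a ha
      rintro z ⟨y, hy, rfl⟩
      simp only [Set.mem_setOf_eq, hd0] at hy ⊢
      refine lt_of_le_of_lt (hmono _ _ fun n => ?_) hy
      calc ρ n (a • y) = ‖a‖ * ρ n y := map_smul_eq_mul _ _ _
        _ ≤ 1 * ρ n y := mul_le_mul_of_nonneg_right ha (hρnn n y)
        _ = ρ n y := one_mul _
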